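/- For integers 1 ≤ j ≤ k with k ≥ 2 and k + j even, letting f = WMON_{k,j}, the Chow parameter of the president satisfies f̂({1}) = 2^{−k}·(2^{k−1} − 2·Σ_{i=0}^{(k−j)/2 − 1} C(k−1, i)). -/
import Mathlib


/-- sign(z) = 1 if z > 0 and 0 otherwise. -/
noncomputable def Rsign (z : ℝ) : ℝ := if 0 < z then 1 else 0

/-- Encoding of {-1,1}: `true ↦ 1`, `false ↦ -1`. -/
def pm (b : Bool) : ℝ := if b then 1 else -1

/-- The weak monarchy function WMON_{k,j}(x) = sign(j·x_1 + x_2 + ⋯ + x_k). -/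
noncomputable def WMON (k j : ℕ) (x : Fin k → Bool) : ℝ :=
  Rsign (∑ i : Fin k, (if (i : ℕ) = 0 then (j : ℝ) else 1) * pm (x i))

/-- The Chow parameter (degree-1 Fourier coefficient) f̂({i}) = 2^{-k}·Σ_x f(x)·x_i. -/
noncomputable def chow (k : ℕ) (f : (Fin k → Bool) → ℝ) (i : Fin k) : ℝ :=
  (∑ x, f x * pm (x i)) / 2 ^ k

lemma wmon_cons (n j : ℕ) (b : Bool) (y : Fin n → Bool) :
    WMON (n+1) j (Fin.cons b y) = Rsign ((j : ℝ) * pm b + ∑ i, pm (y i)) := by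
  unfold WMON
  rw [Fin.sum_univ_succ]
  simp [Fin.cons_zero, Fin.cons_succ]

/-- The canonical equivalence between subsets and boolean functions. -/
def finsetEquivBool (n : ℕ) : Finset (Fin n) ≃ (Fin n → Bool) where
  toFun A := fun i => decide (i ∈ A)
  invFun y := Finset.univ.filter (fun i => y i)
  left_inv A := by ext i; simp
  right_inv y := by funext i; simp

lemma sum_fun_card (n : ℕ) (g : ℕ → ℝ) :
    ∑ y : Fin n → Bool, g ((Finset.univ.filter (fun i => y i)).card)
      = ∑ t ∈ Finset.range (n+1), (n.choose t : ℝ) * g t := by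
  rw [← Equiv.sum_comp (finsetEquivBool n)
    (fun y => g ((Finset.univ.filter (fun i => y i)).card))]
  have h1 : ∀ A : Finset (Fin n),
      g ((Finset.univ.filter (fun i => (finsetEquivBool n A) i)).card) = g A.card := by
    intro A
    congr 1
    congr 1
    simp [finsetEquivBool]
  rw [Finset.sum_congr rfl (fun A _ => h1 A)]
  rw [← Finset.powerset_univ, Finset.sum_powerset]
  rw [Finset.card_univ, Fintype.card_fin]
  refine Finset.sum_congr rfl (fun t _ => ?_)
  have h2 : ∀ A ∈ Finset.powersetCard t (Finset.univ : Finset (Fin n)),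
      g A.card = g t := by
    intro A hA
    rw [(Finset.mem_powersetCard.mp hA).2]
  rw [Finset.sum_congr rfl h2, Finset.sum_const, Finset.card_powersetCard,
    Finset.card_univ, Fintype.card_fin, nsmul_eq_mul]

lemma sum_pm_eq (n : ℕ) (y : Fin n → Bool) :
    ∑ i, pm (y i)
      = 2 * ((Finset.univ.filter (fun i => y i)).card : ℝ) - n := by
  have h : ∀ i, pm (y i) = (if y i then (2:ℝ) else 0) - 1 := by
    intro i; cases hyi : y i <;> simp [pm] <;> norm_num
  rw [Finset.sum_congr rfl (fun i _ => h i), Finset.sum_sub_distrib,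
    ← Finset.sum_filter, Finset.sum_const, Finset.sum_const]
  simp [mul_comm]

theorem stmt_10 (j k : ℕ) (hj : 1 ≤ j) (hjk : j ≤ k) (hk : 2 ≤ k)
    (he : Even (k + j)) :
    chow k (WMON k j) ⟨0, by omega⟩
      = ((2 : ℝ) ^ (k - 1)
          - 2 * (∑ i ∈ Finset.range ((k - j) / 2), (Nat.choose (k - 1) i : ℝ))) / 2 ^ k := by
  obtain ⟨n, rfl⟩ : ∃ n, k = n + 1 := ⟨k - 1, by omega⟩
  obtain ⟨m, hm⟩ := he
  set c := (n + 1 - j) / 2 with hcdef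
  have hc : n + 1 = j + 2 * c := by omega
  have hcn : c ≤ n + 1 := by omega
  rw [chow]
  congr 1
  rw [← Equiv.sum_comp (Fin.consEquiv (fun _ => Bool))
    (fun x => WMON (n+1) j x * pm (x ⟨0, by omega⟩))]
  rw [Fintype.sum_prod_type]
  have hcons : ∀ (b : Bool) (y : Fin n → Bool),
      WMON (n+1) j (Fin.consEquiv (fun _ => Bool) (b, y))
        * pm ((Fin.consEquiv (fun _ => Bool) (b, y)) ⟨0, by omega⟩)
      = Rsign ((j : ℝ) * pm b + ∑ i, pm (y i)) * pm b := by
    intro b y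
    have h' : (Fin.consEquiv (fun _ => Bool) (b, y)) = Fin.cons b y := rfl
    rw [h', wmon_cons]
    simp
  simp only [hcons]
  rw [Fintype.sum_bool]
  have hform : ∀ (z : ℝ) (y : Fin n → Bool),
      Rsign (z + ∑ i, pm (y i))
        = Rsign (z + (2 * ((Finset.univ.filter (fun i => y i)).card : ℝ) - n)) := by
    intro z y
    rw [sum_pm_eq]
  have htrue : (∑ y : Fin n → Bool, Rsign ((j:ℝ) * pm true + ∑ i, pm (y i)) * pm true)
      = ∑ t ∈ Finset.range (n+1),
          (n.choose t : ℝ) * Rsign ((j:ℝ) + (2 * (t:ℝ) - n)) := by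
    have hpt : pm true = 1 := rfl
    rw [hpt]
    simp only [mul_one]
    rw [Finset.sum_congr rfl (fun y _ => hform (j:ℝ) y)]
    exact sum_fun_card n (fun t => Rsign ((j:ℝ) + (2 * (t:ℝ) - n)))
  have hfalse : (∑ y : Fin n → Bool, Rsign ((j:ℝ) * pm false + ∑ i, pm (y i)) * pm false)
      = -∑ t ∈ Finset.range (n+1),
          (n.choose t : ℝ) * Rsign (-(j:ℝ) + (2 * (t:ℝ) - n)) := by
    have hpf : pm false = -1 := rfl
    rw [hpf]
    simp only [mul_neg_one]
    rw [Finset.sum_neg_distrib]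
    rw [Finset.sum_congr rfl (fun y _ => hform (-(j:ℝ)) y)]
    rw [sum_fun_card n (fun t => Rsign (-(j:ℝ) + (2 * (t:ℝ) - n)))]
  rw [htrue, hfalse]
  have hR1 : ∀ t ∈ Finset.range (n+1),
      (n.choose t : ℝ) * Rsign ((j:ℝ) + (2 * (t:ℝ) - n))
        = (n.choose t : ℝ) - (if t < c then (n.choose t : ℝ) else 0) := by
    intro t _
    unfold Rsign
    have hiff : (0 < (j:ℝ) + (2 * (t:ℝ) - n)) ↔ c ≤ t := by
      rw [show (0 < (j:ℝ) + (2 * (t:ℝ) - n)) ↔ ((n:ℝ) < j + 2 * t) by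
        constructor <;> intro <;> linarith]
      rw [show ((n:ℝ) < (j:ℝ) + 2 * t) ↔ (n < j + 2 * t) by norm_cast]
      omega
    by_cases hct : c ≤ t
    · rw [if_pos (hiff.mpr hct), if_neg (by omega)]; ring
    · rw [if_neg (fun h => hct (hiff.mp h)), if_pos (by omega)]; ring
  have hR2 : ∀ t ∈ Finset.range (n+1),
      (n.choose t : ℝ) * Rsign (-(j:ℝ) + (2 * (t:ℝ) - n))
        = (if c + j ≤ t then (n.choose t : ℝ) else 0) := by
    intro t _
    unfold Rsign
    have hiff : (0 < -(j:ℝ) + (2 * (t:ℝ) - n)) ↔ c + j ≤ t := by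
      rw [show (0 < -(j:ℝ) + (2 * (t:ℝ) - n)) ↔ ((n:ℝ) + j < 2 * t) by
        constructor <;> intro <;> linarith]
      rw [show ((n:ℝ) + (j:ℝ) < 2 * t) ↔ (n + j < 2 * t) by norm_cast]
      omega
    by_cases hct : c + j ≤ t
    · rw [if_pos (hiff.mpr hct), if_pos hct]; ring
    · rw [if_neg (fun h => hct (hiff.mp h)), if_neg hct]; ring
  rw [Finset.sum_congr rfl hR1, Finset.sum_congr rfl hR2]
  rw [Finset.sum_sub_distrib]
  have hchoose : ∑ t ∈ Finset.range (n+1), (n.choose t : ℝ) = 2 ^ n := by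
    rw [← Nat.cast_sum, Nat.sum_range_choose]; push_cast; ring
  have hrefl : ∑ t ∈ Finset.range (n+1), (if c + j ≤ t then (n.choose t : ℝ) else 0)
      = ∑ t ∈ Finset.range (n+1), (if t < c then (n.choose t : ℝ) else 0) := by
    rw [← Finset.sum_range_reflect (fun t => if c + j ≤ t then (n.choose t : ℝ) else 0) (n+1)]
    refine Finset.sum_congr rfl (fun t ht => ?_)
    have htn : t ≤ n := by simpa [Nat.lt_succ_iff] using ht
    have h1 : n + 1 - 1 - t = n - t := by omega
    rw [h1]
    have h2 : (c + j ≤ n - t) ↔ t < c := by omega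
    have h3 : n.choose (n - t) = n.choose t := Nat.choose_symm htn
    by_cases hlt : t < c
    · rw [if_pos (h2.mpr hlt), if_pos hlt, h3]
    · rw [if_neg (fun h => hlt (h2.mp h)), if_neg hlt]
  rw [hrefl, hchoose]
  have hres : ∑ t ∈ Finset.range (n+1), (if t < c then (n.choose t : ℝ) else 0)
      = ∑ t ∈ Finset.range c, (n.choose t : ℝ) := by
    rw [← Finset.sum_subset (Finset.range_subset_range.mpr hcn)
      (fun x _ hx => by rw [if_neg (by simpa using hx)])]
    exact Finset.sum_congr rfl (fun t ht => if_pos (Finset.mem_range.mp ht))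
  rw [hres]
  have hk1 : n + 1 - 1 = n := by omega
  rw [hk1]
  ring
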